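/- For any positive integers p, q, n with n >= 2, and G_{p,q} the disjoint union of p copies of B_q, the optimal minimum sum vertex cover cost phi(G_{p,q}) satisfies phi(G_{p,q}) > p^2 * n^{3q-1} * (n+2). -/

import Mathlib

open Finset

/-- Vertex set of the bipartite graph `B_q`: the left side `L` (first summand,
`2 n^q` vertices), the matching side `R₀` (second summand, `2 n^q` vertices), and
the groups `R₁, ..., R_q` (`⟨j, x⟩` encodes the `x`-th vertex of `R_{j+1}`). -/
abbrev BqV (n q : ℕ) := Fin (2 * n ^ q) ⊕ (Fin (2 * n ^ q) ⊕ Fin q × Fin (n ^ q))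

/-- The base relation of `B_q`: the `a`-th vertex of `L` is matched to the `a`-th
vertex of `R₀`, and it is joined to a vertex `x` of `R_i` (`i = j + 1`) exactly when
they lie in corresponding parts: `L` is split into `n^{q-i}` parts of size `2 n^i`
and `R_i` into `n^{q-i}` parts of size `n^i`. -/
def bqRel (n q : ℕ) : BqV n q → BqV n q → Bool
  | Sum.inl a, Sum.inr (Sum.inl b) => a.val == b.val
  | Sum.inl a, Sum.inr (Sum.inr (j, x)) =>
      a.val / (2 * n ^ (j.val + 1)) == x.val / n ^ (j.val + 1)
  | _, _ => false

/-- The bipartite graph `B_q` (with parameter `n`). -/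
def Bq (n q : ℕ) : SimpleGraph (BqV n q) :=
  SimpleGraph.fromRel (fun u v => bqRel n q u v = true)

instance (n q : ℕ) : DecidableRel (Bq n q).Adj := fun u v =>
  decidable_of_iff (u ≠ v ∧ (bqRel n q u v = true ∨ bqRel n q v u = true))
    (SimpleGraph.fromRel_adj (fun a b => bqRel n q a b = true) u v).symm

/-- The left side `L` of `B_q`, as a finset of vertices. -/
def LsetBq (n q : ℕ) : Finset (BqV n q) := Finset.univ.image Sum.inl

/-- A vertex cover of a graph: a set of vertices meeting every edge. -/
def IsVC {V : Type*} (G : SimpleGraph V) (S : Finset V) : Prop :=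
  ∀ u v, G.Adj u v → u ∈ S ∨ v ∈ S

/-- An ordering of the vertices of a finite graph: a bijection onto `{1, ..., |V|}`. -/
def IsGOrdering (V : Type*) [Fintype V] (σ : V → ℕ) : Prop :=
  Set.BijOn σ Set.univ (Set.Icc 1 (Fintype.card V))

/-- The minimum sum vertex cover cost of an ordering: every edge pays the position of
its first endpoint. -/
def gCost {V : Type*} [Fintype V] [DecidableEq V] (G : SimpleGraph V)
    [DecidableRel G.Adj] (σ : V → ℕ) : ℕ :=
  ∑ e ∈ G.edgeFinset, Sym2.lift ⟨fun u v => min (σ u) (σ v), fun u v => min_comm _ _⟩ e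

/-- The disjoint union `G_{p,q}` of `p` copies of `B_q`. -/
def Gpq (p n q : ℕ) : SimpleGraph (Fin p × BqV n q) :=
  SimpleGraph.fromRel (fun u v => u.1 = v.1 ∧ (Bq n q).Adj u.2 v.2)

instance (p n q : ℕ) : DecidableRel (Gpq p n q).Adj := fun u v =>
  decidable_of_iff
    (u ≠ v ∧ ((u.1 = v.1 ∧ (Bq n q).Adj u.2 v.2) ∨ (v.1 = u.1 ∧ (Bq n q).Adj v.2 u.2)))
    (SimpleGraph.fromRel_adj (fun a b => a.1 = b.1 ∧ (Bq n q).Adj a.2 b.2) u v).symm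


lemma gpq_adj_iff {p n q : ℕ} (u v : Fin p × BqV n q) :
    (Gpq p n q).Adj u v ↔ u.1 = v.1 ∧ (Bq n q).Adj u.2 v.2 := by
  rw [Gpq, SimpleGraph.fromRel_adj]
  constructor
  · rintro ⟨hne, h | h⟩
    · exact ⟨h.1, h.2⟩
    · exact ⟨h.1.symm, h.2.symm⟩
  · rintro ⟨h1, h2⟩
    refine ⟨fun h => h2.ne (congrArg Prod.snd h), Or.inl ⟨h1, h2⟩⟩

lemma bq_adj_inl {n q : ℕ} {a : Fin (2 * n ^ q)} {w : BqV n q}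
    (h : (Bq n q).Adj (Sum.inl a) w) :
    (∃ b, w = Sum.inr (Sum.inl b) ∧ a.val = b.val) ∨
    (∃ j x, w = Sum.inr (Sum.inr (j, x)) ∧
      a.val / (2 * n ^ (j.val + 1)) = x.val / n ^ (j.val + 1)) := by
  rw [Bq, SimpleGraph.fromRel_adj] at h
  obtain ⟨hne, h | h⟩ := h <;>
    rcases w with a' | b' | ⟨j', x'⟩ <;> simp [bqRel] at h <;> simp [h] <;>
    exact ⟨j', x', ⟨rfl, rfl⟩, h⟩

lemma bq_adj_inr0 {n q : ℕ} {b : Fin (2 * n ^ q)} {w : BqV n q}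
    (h : (Bq n q).Adj (Sum.inr (Sum.inl b)) w) :
    ∃ a, w = Sum.inl a ∧ a.val = b.val := by
  rw [Bq, SimpleGraph.fromRel_adj] at h
  obtain ⟨hne, h | h⟩ := h <;>
    rcases w with a' | b' | ⟨j', x'⟩ <;> simp [bqRel] at h <;> simp [h]

lemma bq_adj_inr1 {n q : ℕ} {j : Fin q} {x : Fin (n ^ q)} {w : BqV n q}
    (h : (Bq n q).Adj (Sum.inr (Sum.inr (j, x))) w) :
    ∃ a, w = Sum.inl a ∧ a.val / (2 * n ^ (j.val + 1)) = x.val / n ^ (j.val + 1) := by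
  rw [Bq, SimpleGraph.fromRel_adj] at h
  obtain ⟨hne, h | h⟩ := h <;>
    rcases w with a' | b' | ⟨j', x'⟩ <;> simp [bqRel] at h <;> simp [h]

/-- encoding of the neighbors of a left vertex -/
def encL (n q : ℕ) (hn0 : 0 < n) : BqV n q → Unit ⊕ ((j : Fin q) × Fin (n ^ (j.1 + 1)))
  | Sum.inr (Sum.inr (j, x)) =>
      Sum.inr ⟨j, ⟨x.val % n ^ (j.1 + 1), Nat.mod_lt _ (Nat.pow_pos hn0)⟩⟩
  | _ => Sum.inl ()

/-- encoding of the neighbors of a right vertex -/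
def encR (n q : ℕ) (e : ℕ) : BqV n q → ℕ
  | Sum.inl a => a.val % e
  | _ => 0

lemma geom_bound (n q : ℕ) (hn : 2 ≤ n) : 1 + ∑ j ∈ range q, n ^ (j + 1) ≤ 2 * n ^ q := by
  induction q with
  | zero => simp [hn]
  | succ q ih =>
    rw [sum_range_succ]
    have h2 : 2 * n ^ q ≤ n ^ (q + 1) := by
      rw [pow_succ, mul_comm]
      exact Nat.mul_le_mul_left _ hn
    omega

lemma deg_le (p n q : ℕ) (hn : 2 ≤ n) (v : Fin p × BqV n q) :
    (Gpq p n q).degree v ≤ 2 * n ^ q := by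
  have hn0 : 0 < n := by omega
  have hq0 : 0 < 2 * n ^ q := by positivity
  rw [← SimpleGraph.card_neighborFinset_eq_degree]
  obtain ⟨i, w⟩ := v
  rcases w with a | b | ⟨j, x⟩
  · -- left vertex: inject neighbors into Unit ⊕ Σ j, Fin (n^(j+1))
    have hle := Finset.card_le_card_of_injOn (fun u => encL n q hn0 u.2)
      (s := (Gpq p n q).neighborFinset (i, Sum.inl a)) (t := Finset.univ)
      (fun _ _ => mem_univ _) ?_
    · refine hle.trans ?_
      rw [card_univ]
      have hcardT : Fintype.card (Unit ⊕ ((j : Fin q) × Fin (n ^ (j.1 + 1)))) =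
          1 + ∑ j ∈ range q, n ^ (j + 1) := by
        simp [Fintype.card_sigma]
        exact Fin.sum_univ_eq_sum_range (fun j => n ^ (j + 1)) q
      rw [hcardT]
      exact geom_bound n q hn
    · intro u1 h1 u2 h2 hφ
      obtain ⟨i1, w1⟩ := u1
      obtain ⟨i2, w2⟩ := u2
      simp only [Finset.mem_coe, SimpleGraph.mem_neighborFinset, gpq_adj_iff] at h1 h2
      have hi1 : i = i1 := h1.1
      have hi2 : i = i2 := h2.1
      subst hi1; subst hi2
      have hb1 : (Bq n q).Adj (Sum.inl a) w1 := h1.2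
      have hb2 : (Bq n q).Adj (Sum.inl a) w2 := h2.2
      simp only at hφ
      rcases bq_adj_inl hb1 with ⟨b1, rfl, he1⟩ | ⟨j1, x1, rfl, he1⟩ <;>
        rcases bq_adj_inl hb2 with ⟨b2, rfl, he2⟩ | ⟨j2, x2, rfl, he2⟩
      · have : b1 = b2 := Fin.ext (by omega)
        subst this; rfl
      · simp [encL] at hφ
      · simp [encL] at hφ
      · simp only [encL, Sum.inr.injEq, Sigma.mk.inj_iff] at hφ
        obtain ⟨rfl, hx⟩ := hφ
        rw [heq_iff_eq, Fin.mk.injEq] at hx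
        have hd1 := Nat.div_add_mod x1.val (n ^ (j1.val + 1))
        have hd2 := Nat.div_add_mod x2.val (n ^ (j1.val + 1))
        have hq12 : x1.val / n ^ (j1.val + 1) = x2.val / n ^ (j1.val + 1) :=
          he1.symm.trans he2
        have hm : n ^ (j1.val + 1) * (x1.val / n ^ (j1.val + 1))
            = n ^ (j1.val + 1) * (x2.val / n ^ (j1.val + 1)) := by rw [hq12]
        have : x1 = x2 := Fin.ext (by omega)
        subst this; rfl
  · -- matched vertex: at most one neighbor
    have hsub : (Gpq p n q).neighborFinset (i, Sum.inr (Sum.inl b)) ⊆ {(i, Sum.inl b)} := by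
      intro u hu
      rw [SimpleGraph.mem_neighborFinset, gpq_adj_iff] at hu
      obtain ⟨i1, w1⟩ := u
      have hi1 : i = i1 := hu.1
      subst hi1
      have hb1 : (Bq n q).Adj (Sum.inr (Sum.inl b)) w1 := hu.2
      obtain ⟨a1, rfl, he⟩ := bq_adj_inr0 hb1
      have : a1 = b := Fin.ext he
      subst this
      exact mem_singleton_self _
    calc ((Gpq p n q).neighborFinset _).card ≤ ({(i, Sum.inl b)} : Finset _).card :=
          card_le_card hsub
      _ ≤ 2 * n ^ q := by rw [card_singleton]; omega
  · -- group vertex: inject neighbors into range (2 * n^q)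
    have hjq : n ^ (j.val + 1) ≤ n ^ q := Nat.pow_le_pow_right hn0 j.isLt
    have hpos : 0 < 2 * n ^ (j.val + 1) := by positivity
    have hle := Finset.card_le_card_of_injOn (fun u => encR n q (2 * n ^ (j.val + 1)) u.2)
      (s := (Gpq p n q).neighborFinset (i, Sum.inr (Sum.inr (j, x)))) (t := range (2 * n ^ q)) ?_ ?_
    · simpa using hle
    · intro u hu
      rw [Finset.mem_coe, SimpleGraph.mem_neighborFinset, gpq_adj_iff] at hu
      obtain ⟨i1, w1⟩ := u
      have hb1 : (Bq n q).Adj (Sum.inr (Sum.inr (j, x))) w1 := hu.2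
      obtain ⟨a1, rfl, he⟩ := bq_adj_inr1 hb1
      simp only [encR, Finset.mem_coe, mem_range]
      calc a1.val % (2 * n ^ (j.val + 1)) < 2 * n ^ (j.val + 1) := Nat.mod_lt _ hpos
        _ ≤ 2 * n ^ q := by omega
    · intro u1 h1 u2 h2 hφ
      obtain ⟨i1, w1⟩ := u1
      obtain ⟨i2, w2⟩ := u2
      simp only [Finset.mem_coe, SimpleGraph.mem_neighborFinset, gpq_adj_iff] at h1 h2
      have hi1 : i = i1 := h1.1
      have hi2 : i = i2 := h2.1
      subst hi1; subst hi2
      have hb1 : (Bq n q).Adj (Sum.inr (Sum.inr (j, x))) w1 := h1.2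
      have hb2 : (Bq n q).Adj (Sum.inr (Sum.inr (j, x))) w2 := h2.2
      obtain ⟨a1, rfl, he1⟩ := bq_adj_inr1 hb1
      obtain ⟨a2, rfl, he2⟩ := bq_adj_inr1 hb2
      simp only [encR] at hφ
      have hd1 := Nat.div_add_mod a1.val (2 * n ^ (j.val + 1))
      have hd2 := Nat.div_add_mod a2.val (2 * n ^ (j.val + 1))
      have hq12 : a1.val / (2 * n ^ (j.val + 1)) = a2.val / (2 * n ^ (j.val + 1)) :=
        he1.trans he2.symm
      have hm : (2 * n ^ (j.val + 1)) * (a1.val / (2 * n ^ (j.val + 1)))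
          = (2 * n ^ (j.val + 1)) * (a2.val / (2 * n ^ (j.val + 1))) := by rw [hq12]
      have : a1 = a2 := Fin.ext (by omega)
      subst this; rfl

lemma bq_adj_mk {n q : ℕ} {a : Fin (2 * n ^ q)} {w : Fin (2 * n ^ q) ⊕ Fin q × Fin (n ^ q)}
    (h : bqRel n q (Sum.inl a) (Sum.inr w) = true) :
    (Bq n q).Adj (Sum.inl a) (Sum.inr w) := by
  rw [Bq, SimpleGraph.fromRel_adj]
  exact ⟨by simp, Or.inl h⟩

lemma edge_lb (p n k : ℕ) (hn : 2 ≤ n) :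
    p * (2 * n ^ (k + 1)) * (n ^ (k + 1) + n ^ k) ≤ (Gpq p n (k + 1)).edgeFinset.card := by
  classical
  have hn0 : 0 < n := by omega
  suffices key : Fintype.card (Fin p × Fin (2 * n ^ (k + 1)) × (Fin (n ^ (k + 1)) ⊕ Fin (n ^ k)))
      ≤ (Gpq p n (k + 1)).edgeFinset.card by
    calc p * (2 * n ^ (k + 1)) * (n ^ (k + 1) + n ^ k)
        = Fintype.card (Fin p × Fin (2 * n ^ (k + 1)) × (Fin (n ^ (k + 1)) ⊕ Fin (n ^ k))) := by
          simp [mul_assoc]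
      _ ≤ _ := key
  rcases k with _ | m
  · -- q = 1 : big group plus matching
    show Fintype.card (Fin p × Fin (2 * n ^ 1) × (Fin (n ^ 1) ⊕ Fin (n ^ 0)))
      ≤ (Gpq p n 1).edgeFinset.card
    let f : Fin p × Fin (2 * n ^ 1) × (Fin (n ^ 1) ⊕ Fin (n ^ 0)) → Sym2 (Fin p × BqV n 1) :=
      fun z =>
        match z.2.2 with
        | Sum.inl x => s((z.1, Sum.inl z.2.1), (z.1, Sum.inr (Sum.inr ((0 : Fin 1), x))))
        | Sum.inr _ => s((z.1, Sum.inl z.2.1), (z.1, Sum.inr (Sum.inl z.2.1)))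
    rw [← card_univ (α := Fin p × Fin (2 * n ^ 1) × (Fin (n ^ 1) ⊕ Fin (n ^ 0)))]
    apply Finset.card_le_card_of_injOn f
    · rintro ⟨i, a, c⟩ -
      rcases c with x | r
      · simp only [f, Finset.mem_coe, SimpleGraph.mem_edgeFinset, SimpleGraph.mem_edgeSet]
        rw [gpq_adj_iff]
        refine ⟨rfl, bq_adj_mk ?_⟩
        simp only [bqRel, beq_iff_eq]
        rw [Nat.div_eq_of_lt, Nat.div_eq_of_lt]
        · exact x.isLt
        · exact a.isLt
      · simp only [f, Finset.mem_coe, SimpleGraph.mem_edgeFinset, SimpleGraph.mem_edgeSet]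
        rw [gpq_adj_iff]
        refine ⟨rfl, bq_adj_mk ?_⟩
        simp [bqRel]
    · rintro ⟨i1, a1, c1⟩ - ⟨i2, a2, c2⟩ - h
      rcases c1 with x1 | r1 <;> rcases c2 with x2 | r2 <;>
        simp only [f, Sym2.eq_iff, Prod.mk.injEq] at h
      · obtain ⟨⟨rfl, ha⟩, _, hx⟩ | ⟨⟨rfl, _⟩, _, h2⟩ := h
        · simp only [Sum.inl.injEq] at ha
          simp only [Sum.inr.injEq, Prod.mk.injEq] at hx
          simp [ha, hx.2]
        · simp at h2
      · obtain ⟨⟨rfl, _⟩, _, hx⟩ | ⟨⟨rfl, _⟩, _, h2⟩ := h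
        · simp at hx
        · simp at h2
      · obtain ⟨⟨rfl, _⟩, _, hx⟩ | ⟨⟨rfl, _⟩, _, h2⟩ := h
        · simp at hx
        · simp at h2
      · obtain ⟨⟨rfl, ha⟩, _, _⟩ | ⟨⟨rfl, _⟩, _, h2⟩ := h
        · simp only [Sum.inl.injEq] at ha
          have hr : r1 = r2 := by
            have h1 := r1.isLt
            have h2 := r2.isLt
            have h3 : n ^ 0 = 1 := pow_zero n
            exact Fin.ext (by omega)
          simp [ha, hr]
        · simp at h2
  · -- q = m + 2 : big group plus second group
    show Fintype.card (Fin p × Fin (2 * n ^ (m + 2)) × (Fin (n ^ (m + 2)) ⊕ Fin (n ^ (m + 1))))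
      ≤ (Gpq p n (m + 2)).edgeFinset.card
    have hq1pos : 0 < 2 * n ^ (m + 1) := by positivity
    have hdiv : ∀ a : Fin (2 * n ^ (m + 2)), a.val / (2 * n ^ (m + 1)) < n := by
      intro a
      apply Nat.div_lt_of_lt_mul
      calc a.val < 2 * n ^ (m + 2) := a.isLt
        _ = 2 * n ^ (m + 1) * n := by ring
    have hxlt : ∀ (a : Fin (2 * n ^ (m + 2))) (r : Fin (n ^ (m + 1))),
        n ^ (m + 1) * (a.val / (2 * n ^ (m + 1))) + r.val < n ^ (m + 2) := by
      intro a r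
      have h1 := hdiv a
      have h2 := r.isLt
      have h3 : n ^ (m + 1) * (a.val / (2 * n ^ (m + 1)) + 1) ≤ n ^ (m + 1) * n :=
        Nat.mul_le_mul_left _ h1
      have h4 : n ^ (m + 1) * (a.val / (2 * n ^ (m + 1)) + 1)
          = n ^ (m + 1) * (a.val / (2 * n ^ (m + 1))) + n ^ (m + 1) := by ring
      have h5 : n ^ (m + 1) * n = n ^ (m + 2) := by ring
      omega
    let f : Fin p × Fin (2 * n ^ (m + 2)) × (Fin (n ^ (m + 2)) ⊕ Fin (n ^ (m + 1)))
        → Sym2 (Fin p × BqV n (m + 2)) :=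
      fun z =>
        match z.2.2 with
        | Sum.inl x => s((z.1, Sum.inl z.2.1),
            (z.1, Sum.inr (Sum.inr ((⟨m + 1, Nat.lt_succ_self _⟩ : Fin (m + 2)), x))))
        | Sum.inr r => s((z.1, Sum.inl z.2.1),
            (z.1, Sum.inr (Sum.inr ((⟨m, by omega⟩ : Fin (m + 2)),
              ⟨n ^ (m + 1) * (z.2.1.val / (2 * n ^ (m + 1))) + r.val, hxlt z.2.1 r⟩))))
    rw [← card_univ (α := Fin p × Fin (2 * n ^ (m + 2)) × (Fin (n ^ (m + 2)) ⊕ Fin (n ^ (m + 1))))]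
    apply Finset.card_le_card_of_injOn f
    · rintro ⟨i, a, c⟩ -
      rcases c with x | r
      · simp only [f, Finset.mem_coe, SimpleGraph.mem_edgeFinset, SimpleGraph.mem_edgeSet]
        rw [gpq_adj_iff]
        refine ⟨rfl, bq_adj_mk ?_⟩
        simp only [bqRel, beq_iff_eq]
        rw [Nat.div_eq_of_lt, Nat.div_eq_of_lt]
        · exact x.isLt
        · exact a.isLt
      · simp only [f, Finset.mem_coe, SimpleGraph.mem_edgeFinset, SimpleGraph.mem_edgeSet]
        rw [gpq_adj_iff]
        refine ⟨rfl, bq_adj_mk ?_⟩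
        simp only [bqRel, beq_iff_eq]
        have hpos : 0 < n ^ (m + 1) := by positivity
        rw [Nat.mul_add_div hpos, Nat.div_eq_of_lt r.isLt, add_zero]
    · rintro ⟨i1, a1, c1⟩ - ⟨i2, a2, c2⟩ - h
      rcases c1 with x1 | r1 <;> rcases c2 with x2 | r2 <;>
        simp only [f, Sym2.eq_iff, Prod.mk.injEq] at h
      · obtain ⟨⟨rfl, ha⟩, _, hx⟩ | ⟨⟨rfl, _⟩, _, h2⟩ := h
        · simp only [Sum.inl.injEq] at ha
          simp only [Sum.inr.injEq, Prod.mk.injEq] at hx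
          simp [ha, hx.2]
        · simp at h2
      · obtain ⟨⟨rfl, ha⟩, _, hx⟩ | ⟨⟨rfl, _⟩, _, h2⟩ := h
        · simp only [Sum.inr.injEq, Prod.mk.injEq, Fin.mk.injEq] at hx
          omega
        · simp at h2
      · obtain ⟨⟨rfl, ha⟩, _, hx⟩ | ⟨⟨rfl, _⟩, _, h2⟩ := h
        · simp only [Sum.inr.injEq, Prod.mk.injEq, Fin.mk.injEq] at hx
          omega
        · simp at h2
      · obtain ⟨⟨rfl, ha⟩, _, hx⟩ | ⟨⟨rfl, _⟩, _, h2⟩ := h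
        · simp only [Sum.inl.injEq] at ha
          simp only [Sum.inr.injEq, Prod.mk.injEq, Fin.mk.injEq] at hx
          subst ha
          have : r1 = r2 := Fin.ext (by omega)
          simp [this]
        · simp at h2


/-- Lower bound on the minimum sum vertex cover cost of `G_{p,q}`:
every ordering has cost greater than `p² n^{3q-1} (n+2)`. -/
theorem stmt_17 (p n q : ℕ) (hp : 1 ≤ p) (hn : 2 ≤ n) (hq : 1 ≤ q) :
    ∀ σ : Fin p × BqV n q → ℕ, IsGOrdering (Fin p × BqV n q) σ →
      p ^ 2 * n ^ (3 * q - 1) * (n + 2) < gCost (Gpq p n q) σ := by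
  obtain ⟨k, rfl⟩ : ∃ k, q = k + 1 := ⟨q - 1, by omega⟩
  intro σ hσ
  classical
  have hn0 : 0 < n := by omega
  set G := Gpq p n (k + 1) with hG
  set mf : Sym2 (Fin p × BqV n (k + 1)) → ℕ :=
    Sym2.lift ⟨fun u v => min (σ u) (σ v), fun u v => min_comm _ _⟩ with hmf
  set D := 2 * n ^ (k + 1) with hD
  set T := p * n ^ k * (n + 1) with hT
  have hσ1 : ∀ v, 1 ≤ σ v := fun v => (hσ.1 (Set.mem_univ v)).1
  have hinj : Set.InjOn σ Set.univ := hσ.2.1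
  have hS : ∀ t : ℕ, (univ.filter (fun v => σ v ≤ t)).card ≤ t := by
    intro t
    have h := Finset.card_le_card_of_injOn σ
      (s := univ.filter (fun v => σ v ≤ t)) (t := Finset.Icc 1 t)
      (fun v hv => mem_Icc.mpr ⟨hσ1 v, (mem_filter.mp hv).2⟩)
      (hinj.mono (Set.subset_univ _))
    calc (univ.filter (fun v => σ v ≤ t)).card ≤ (Finset.Icc 1 t).card := h
      _ = t := by rw [Nat.card_Icc]; omega
  have hE : T * D ≤ G.edgeFinset.card := by
    calc T * D = p * (2 * n ^ (k + 1)) * (n ^ (k + 1) + n ^ k) := by rw [hT, hD]; ring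
      _ ≤ _ := edge_lb p n k hn
  have hlayer : ∀ t, 1 ≤ t →
      T * D - (t - 1) * D ≤ (G.edgeFinset.filter (fun e => t ≤ mf e)).card := by
    intro t ht
    have hsplit := Finset.card_filter_add_card_filter_not
      (s := G.edgeFinset) (p := fun e => t ≤ mf e)
    have hbad : (G.edgeFinset.filter (fun e => ¬ t ≤ mf e)).card ≤ (t - 1) * D := by
      have hsub : G.edgeFinset.filter (fun e => ¬ t ≤ mf e) ⊆
          (univ.filter (fun v => σ v ≤ t - 1)).biUnion (fun v => G.incidenceFinset v) := by
        intro e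
        induction e using Sym2.ind with
        | _ u w =>
          intro he
          rw [mem_filter] at he
          obtain ⟨heE, hlt⟩ := he
          simp only [hmf, Sym2.lift_mk] at hlt
          rw [mem_biUnion]
          have hor : σ u < t ∨ σ w < t := by omega
          rcases hor with h | h
          · exact ⟨u, mem_filter.mpr ⟨mem_univ _, by omega⟩,
              (SimpleGraph.mem_incidenceFinset _ _ _).mpr
                ⟨SimpleGraph.mem_edgeFinset.mp heE, Sym2.mem_mk_left _ _⟩⟩
          · exact ⟨w, mem_filter.mpr ⟨mem_univ _, by omega⟩,
              (SimpleGraph.mem_incidenceFinset _ _ _).mpr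
                ⟨SimpleGraph.mem_edgeFinset.mp heE, Sym2.mem_mk_right _ _⟩⟩
      calc (G.edgeFinset.filter (fun e => ¬ t ≤ mf e)).card
          ≤ ((univ.filter (fun v => σ v ≤ t - 1)).biUnion (fun v => G.incidenceFinset v)).card :=
            card_le_card hsub
        _ ≤ ∑ v ∈ univ.filter (fun v => σ v ≤ t - 1), (G.incidenceFinset v).card :=
            card_biUnion_le
        _ ≤ ∑ v ∈ univ.filter (fun v => σ v ≤ t - 1), D := by
            refine sum_le_sum fun v _ => ?_
            rw [SimpleGraph.card_incidenceFinset_eq_degree]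
            exact deg_le p n (k + 1) hn v
        _ = (univ.filter (fun v => σ v ≤ t - 1)).card * D := by rw [sum_const, smul_eq_mul]
        _ ≤ (t - 1) * D := Nat.mul_le_mul_right _ (hS (t - 1))
    omega
  have hcost : ∑ t ∈ Icc 1 T, (G.edgeFinset.filter (fun e => t ≤ mf e)).card ≤ gCost G σ := by
    calc ∑ t ∈ Icc 1 T, (G.edgeFinset.filter (fun e => t ≤ mf e)).card
        = ∑ t ∈ Icc 1 T, ∑ e ∈ G.edgeFinset, if t ≤ mf e then 1 else 0 :=
          sum_congr rfl fun t _ => card_filter _ _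
      _ = ∑ e ∈ G.edgeFinset, ∑ t ∈ Icc 1 T, if t ≤ mf e then 1 else 0 := sum_comm
      _ ≤ ∑ e ∈ G.edgeFinset, mf e := by
          refine sum_le_sum fun e _ => ?_
          rw [← card_filter]
          have hss : (Icc 1 T).filter (fun t => t ≤ mf e) ⊆ Icc 1 (mf e) := by
            intro t ht
            rw [mem_filter, mem_Icc] at ht
            exact mem_Icc.mpr ⟨ht.1.1, ht.2⟩
          calc ((Icc 1 T).filter (fun t => t ≤ mf e)).card ≤ (Icc 1 (mf e)).card :=
                card_le_card hss
            _ = mf e := by rw [Nat.card_Icc]; omega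
      _ = gCost G σ := rfl
  have hsum : T * (T + 1) * n ^ (k + 1) ≤
      ∑ t ∈ Icc 1 T, (G.edgeFinset.filter (fun e => t ≤ mf e)).card := by
    have h1 : ∀ t ∈ Icc 1 T, T * D - (t - 1) * D = (T + 1 - t) * D := by
      intro t ht
      rw [← Nat.sub_mul]
      congr 1
      have := mem_Icc.mp ht
      omega
    have h2 : ∑ t ∈ Icc 1 T, (T + 1 - t) = ∑ t ∈ Icc 1 T, t := by
      refine sum_nbij' (fun t => T + 1 - t) (fun t => T + 1 - t) ?_ ?_ ?_ ?_ ?_ <;>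
        intro t ht <;> simp only [mem_Icc] at * <;> omega
    have h3 : (∑ t ∈ Icc 1 T, (T + 1 - t)) + (∑ t ∈ Icc 1 T, t) = T * (T + 1) := by
      rw [← sum_add_distrib]
      have h4 : ∀ t ∈ Icc 1 T, (T + 1 - t) + t = T + 1 := by
        intro t ht
        have := mem_Icc.mp ht
        omega
      rw [sum_congr rfl h4, sum_const, Nat.card_Icc, smul_eq_mul, Nat.add_sub_cancel]
    calc T * (T + 1) * n ^ (k + 1)
        = ∑ t ∈ Icc 1 T, (T * D - (t - 1) * D) := by
          rw [sum_congr rfl h1, ← sum_mul]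
          rw [hD]
          have : (∑ t ∈ Icc 1 T, (T + 1 - t)) * 2 = T * (T + 1) := by omega
          calc T * (T + 1) * n ^ (k + 1)
              = ((∑ t ∈ Icc 1 T, (T + 1 - t)) * 2) * n ^ (k + 1) := by rw [this]
            _ = (∑ t ∈ Icc 1 T, (T + 1 - t)) * (2 * n ^ (k + 1)) := by ring
      _ ≤ _ := sum_le_sum fun t ht => hlayer t (mem_Icc.mp ht).1
  have harith : p ^ 2 * n ^ (3 * (k + 1) - 1) * (n + 2) < T * (T + 1) * n ^ (k + 1) := by
    have he : 3 * (k + 1) - 1 = 3 * k + 2 := by omega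
    rw [he, hT]
    have hpos : 0 < p ^ 2 * n ^ (3 * k + 1) :=
      Nat.mul_pos (Nat.pow_pos hp) (Nat.pow_pos hn0)
    have hlt : n * (n + 2) < (n + 1) * (n + 1) := by nlinarith
    calc p ^ 2 * n ^ (3 * k + 2) * (n + 2)
        = p ^ 2 * n ^ (3 * k + 1) * (n * (n + 2)) := by ring
      _ < p ^ 2 * n ^ (3 * k + 1) * ((n + 1) * (n + 1)) := mul_lt_mul_of_pos_left hlt hpos
      _ = (p * n ^ k * (n + 1)) * (p * n ^ k * (n + 1)) * n ^ (k + 1) := by ring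
      _ ≤ (p * n ^ k * (n + 1)) * ((p * n ^ k * (n + 1)) + 1) * n ^ (k + 1) :=
          Nat.mul_le_mul_right _ (Nat.mul_le_mul_left _ (Nat.le_succ _))
  exact lt_of_lt_of_le harith (le_trans hsum hcost)
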